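/- The smallest subfield of ℂ containing 0, 1, and i that is closed under complex conjugation, square roots, and cube roots equals the set of all z ∈ ℂ lying in some subfield of the form ℚ(α₁,...,αₙ) where for each i, αᵢ^{kᵢ} ∈ ℚ(α₁,...,α_{i-1}) with kᵢ ∈ {2,3}. -/

import Mathlib

/-- The property of being a subfield of ℂ containing `i` that is closed under
complex conjugation, square roots, and cube roots. -/
def IsConicClosed (F : Subfield ℂ) : Prop :=
  Complex.I ∈ F ∧
  (∀ z ∈ F, (starRingEnd ℂ) z ∈ F) ∧
  (∀ z ∈ F, ∃ w ∈ F, w ^ 2 = z) ∧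
  (∀ z ∈ F, ∃ w ∈ F, w ^ 3 = z)

section Aux

open Complex

/-- If a conic-closed field contains `z`, it contains every square root of `z`. -/
lemma aux_sq_mem {G : Subfield ℂ} (hG : IsConicClosed G) {z w : ℂ}
    (hz : z ∈ G) (hw : w ^ 2 = z) : w ∈ G := by
  obtain ⟨w', hw', he⟩ := hG.2.2.1 z hz
  have h : (w - w') * (w + w') = 0 := by linear_combination hw - he
  rcases mul_eq_zero.mp h with h | h
  · rwa [sub_eq_zero.mp h]
  · have : w = -w' := eq_neg_of_add_eq_zero_left h
    rw [this]; exact G.neg_mem hw'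

/-- If a conic-closed field contains `z`, it contains every cube root of `z`. -/
lemma aux_cube_mem {G : Subfield ℂ} (hG : IsConicClosed G) {z w : ℂ}
    (hz : z ∈ G) (hw : w ^ 3 = z) : w ∈ G := by
  obtain ⟨w', hw', he⟩ := hG.2.2.2 z hz
  by_cases h0 : w' = 0
  · have hz0 : z = 0 := by rw [← he, h0]; ring
    have : w = 0 := by
      have : w ^ 3 = 0 := by rw [hw, hz0]
      exact pow_eq_zero_iff (by norm_num) |>.mp this
    rw [this]; exact G.zero_mem
  · have h3 : (3 : ℂ) ∈ G := by exact_mod_cast intCast_mem G 3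
    have h2 : (2 : ℂ) ∈ G := by exact_mod_cast intCast_mem G 2
    obtain ⟨s, hs, hs2⟩ := hG.2.2.1 3 h3
    set t : ℂ := Complex.I * s with ht_def
    have ht : t ∈ G := G.mul_mem hG.1 hs
    have ht2 : t ^ 2 = -3 := by
      rw [ht_def, mul_pow, Complex.I_sq, hs2]; ring
    have hfac : (w - w') * ((2 * w + w' - t * w') * (2 * w + w' + t * w')) = 0 := by
      linear_combination 4 * hw - 4 * he - (w - w') * w' ^ 2 * ht2
    rcases mul_eq_zero.mp hfac with h | h
    · rwa [sub_eq_zero.mp h]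
    · rcases mul_eq_zero.mp h with h | h
      · have : w = (t * w' - w') / 2 := by
          field_simp
          linear_combination h
        rw [this]
        exact G.div_mem (G.sub_mem (G.mul_mem ht hw') hw') h2
      · have : w = (-(t * w') - w') / 2 := by
          field_simp
          linear_combination h
        rw [this]
        exact G.div_mem (G.sub_mem (G.neg_mem (G.mul_mem ht hw')) hw') h2

lemma aux_top_conic : IsConicClosed ⊤ := by
  refine ⟨trivial, fun _ _ => trivial, fun z _ => ?_, fun z _ => ?_⟩
  · obtain ⟨w, hw⟩ := IsAlgClosed.exists_pow_nat_eq z (n := 2) (by norm_num)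
    exact ⟨w, trivial, hw⟩
  · obtain ⟨w, hw⟩ := IsAlgClosed.exists_pow_nat_eq z (n := 3) (by norm_num)
    exact ⟨w, trivial, hw⟩

lemma aux_sInf_conic : IsConicClosed (sInf {G : Subfield ℂ | IsConicClosed G}) := by
  refine ⟨?_, ?_, ?_, ?_⟩
  · exact Subfield.mem_sInf.mpr fun G hG => hG.1
  · intro z hz
    exact Subfield.mem_sInf.mpr fun G hG => hG.2.1 z (Subfield.mem_sInf.mp hz G hG)
  · intro z hz
    obtain ⟨w, hw⟩ := IsAlgClosed.exists_pow_nat_eq z (n := 2) (by norm_num)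
    exact ⟨w, Subfield.mem_sInf.mpr fun G hG =>
      aux_sq_mem hG (Subfield.mem_sInf.mp hz G hG) hw, hw⟩
  · intro z hz
    obtain ⟨w, hw⟩ := IsAlgClosed.exists_pow_nat_eq z (n := 3) (by norm_num)
    exact ⟨w, Subfield.mem_sInf.mpr fun G hG =>
      aux_cube_mem hG (Subfield.mem_sInf.mp hz G hG) hw, hw⟩

/- Fin set lemmas -/

lemma aux_setA {n : ℕ} (i : Fin n) :
    {j : Fin (n + 1) | j < Fin.castSucc i} = Fin.castSucc '' {j | j < i} := by
  ext j
  simp only [Set.mem_setOf_eq, Set.mem_image]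
  constructor
  · intro hj
    have hne : j ≠ Fin.last n := ne_of_lt (lt_of_lt_of_le hj (Fin.le_last _))
    obtain ⟨j', rfl⟩ := Fin.exists_castSucc_eq.mpr hne
    exact ⟨j', Fin.castSucc_lt_castSucc_iff.mp hj, rfl⟩
  · rintro ⟨j', hj', rfl⟩
    exact Fin.castSucc_lt_castSucc_iff.mpr hj'

lemma aux_setB (n : ℕ) :
    {j : Fin (n + 1) | j < Fin.last n} = Set.range Fin.castSucc := by
  ext j
  simp only [Set.mem_setOf_eq, Set.mem_range]
  constructor
  · intro hj
    obtain ⟨j', rfl⟩ := Fin.exists_castSucc_eq.mpr (ne_of_lt hj)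
    exact ⟨j', rfl⟩
  · rintro ⟨j', rfl⟩
    exact Fin.castSucc_lt_last j'

/-- The "tower" predicate, bundled. -/
def IsCTower {n : ℕ} (α : Fin n → ℂ) (k : Fin n → ℕ) : Prop :=
  (∀ i, k i = 2 ∨ k i = 3) ∧
  (∀ i : Fin n, α i ^ k i ∈ Subfield.closure (α '' { j | j < i }))

lemma aux_tower_init {n : ℕ} {α : Fin (n + 1) → ℂ} {k : Fin (n + 1) → ℕ}
    (hT : IsCTower α k) : IsCTower (α ∘ Fin.castSucc) (k ∘ Fin.castSucc) := by
  refine ⟨fun i => hT.1 _, fun i => ?_⟩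
  have := hT.2 (Fin.castSucc i)
  rwa [aux_setA, Set.image_image] at this

lemma aux_tower_snoc {n : ℕ} {α : Fin n → ℂ} {k : Fin n → ℕ}
    (hT : IsCTower α k) {w : ℂ} {m : ℕ} (hm : m = 2 ∨ m = 3)
    (hw : w ^ m ∈ Subfield.closure (Set.range α)) :
    IsCTower (Fin.snoc α w) (Fin.snoc k m) := by
  constructor
  · intro i
    induction i using Fin.lastCases with
    | last => simpa using hm
    | cast i => simpa using hT.1 i
  · intro i
    induction i using Fin.lastCases with
    | last =>
      have hset : (Fin.snoc α w : Fin (n + 1) → ℂ) '' {j | j < Fin.last n}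
          = Set.range α := by
        rw [aux_setB, ← Set.range_comp]
        ext j
        simp
      rw [hset, Fin.snoc_last, Fin.snoc_last]
      exact hw
    | cast i =>
      have hset : (Fin.snoc α w : Fin (n + 1) → ℂ) '' {j | j < Fin.castSucc i}
          = α '' {j | j < i} := by
        rw [aux_setA, Set.image_image]
        ext j
        simp
      rw [hset, Fin.snoc_castSucc, Fin.snoc_castSucc]
      exact hT.2 i

lemma aux_range_snoc_le {n : ℕ} (α : Fin n → ℂ) (w : ℂ) :
    Subfield.closure (Set.range α) ≤
      Subfield.closure (Set.range (Fin.snoc α w : Fin (n + 1) → ℂ)) := by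
  apply Subfield.closure_mono
  rintro x ⟨i, rfl⟩
  exact ⟨Fin.castSucc i, by simp⟩

/-- Two towers can be merged into a single tower dominating both. -/
lemma aux_merge :
    ∀ (n₂ : ℕ) (α₂ : Fin n₂ → ℂ) (k₂ : Fin n₂ → ℕ), IsCTower α₂ k₂ →
    ∀ (n₁ : ℕ) (α₁ : Fin n₁ → ℂ) (k₁ : Fin n₁ → ℕ), IsCTower α₁ k₁ →
    ∃ (n : ℕ) (α : Fin n → ℂ) (k : Fin n → ℕ), IsCTower α k ∧
      Subfield.closure (Set.range α₁) ≤ Subfield.closure (Set.range α) ∧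
      Subfield.closure (Set.range α₂) ≤ Subfield.closure (Set.range α) := by
  intro n₂
  induction n₂ with
  | zero =>
    intro α₂ k₂ _ n₁ α₁ k₁ hT₁
    refine ⟨n₁, α₁, k₁, hT₁, le_refl _, ?_⟩
    rw [Set.range_eq_empty α₂, Subfield.closure_empty]
    exact bot_le
  | succ m ih =>
    intro α₂ k₂ hT₂ n₁ α₁ k₁ hT₁
    obtain ⟨n, α, k, hT, h1, h2⟩ :=
      ih (α₂ ∘ Fin.castSucc) (k₂ ∘ Fin.castSucc) (aux_tower_init hT₂) n₁ α₁ k₁ hT₁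
    have hlastpow : α₂ (Fin.last m) ^ k₂ (Fin.last m) ∈ Subfield.closure (Set.range α) := by
      have := hT₂.2 (Fin.last m)
      rw [aux_setB, ← Set.range_comp] at this
      exact h2 this
    refine ⟨n + 1, Fin.snoc α (α₂ (Fin.last m)), Fin.snoc k (k₂ (Fin.last m)),
      aux_tower_snoc hT (hT₂.1 _) hlastpow, ?_, ?_⟩
    · exact h1.trans (aux_range_snoc_le α _)
    · rw [Subfield.closure_le]
      rintro x ⟨i, rfl⟩
      induction i using Fin.lastCases with
      | last =>
        apply Subfield.subset_closure
        exact ⟨Fin.last n, by simp⟩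
      | cast i =>
        have : α₂ (Fin.castSucc i) ∈ Subfield.closure (Set.range (α₂ ∘ Fin.castSucc)) :=
          Subfield.subset_closure ⟨i, rfl⟩
        exact (h2.trans (aux_range_snoc_le α _)) this

/-- Conjugation maps closures into closures of conjugated sets. -/
lemma aux_conj_closure {s : Set ℂ} {x : ℂ} (hx : x ∈ Subfield.closure s) :
    (starRingEnd ℂ) x ∈ Subfield.closure ((starRingEnd ℂ) '' s) := by
  have h : Subfield.closure s ≤
      Subfield.comap (starRingEnd ℂ) (Subfield.closure ((starRingEnd ℂ) '' s)) := by
    rw [Subfield.closure_le]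
    intro y hy
    exact Subfield.subset_closure ⟨y, hy, rfl⟩
  exact h hx

/-- The subfield of all elements reachable by towers of square/cube roots. -/
noncomputable def conicSet : Subfield ℂ where
  carrier := { z : ℂ | ∃ (n : ℕ) (α : Fin n → ℂ) (k : Fin n → ℕ),
      IsCTower α k ∧ z ∈ Subfield.closure (Set.range α) }
  one_mem' := ⟨0, Fin.elim0, Fin.elim0, ⟨fun i => i.elim0, fun i => i.elim0⟩,
    Subfield.one_mem _⟩
  zero_mem' := ⟨0, Fin.elim0, Fin.elim0, ⟨fun i => i.elim0, fun i => i.elim0⟩,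
    Subfield.zero_mem _⟩
  mul_mem' := by
    rintro a b ⟨n₁, α₁, k₁, hT₁, ha⟩ ⟨n₂, α₂, k₂, hT₂, hb⟩
    obtain ⟨n, α, k, hT, h1, h2⟩ := aux_merge n₂ α₂ k₂ hT₂ n₁ α₁ k₁ hT₁
    exact ⟨n, α, k, hT, Subfield.mul_mem _ (h1 ha) (h2 hb)⟩
  add_mem' := by
    rintro a b ⟨n₁, α₁, k₁, hT₁, ha⟩ ⟨n₂, α₂, k₂, hT₂, hb⟩
    obtain ⟨n, α, k, hT, h1, h2⟩ := aux_merge n₂ α₂ k₂ hT₂ n₁ α₁ k₁ hT₁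
    exact ⟨n, α, k, hT, Subfield.add_mem _ (h1 ha) (h2 hb)⟩
  neg_mem' := by
    rintro a ⟨n, α, k, hT, ha⟩
    exact ⟨n, α, k, hT, Subfield.neg_mem _ ha⟩
  inv_mem' := by
    rintro a ⟨n, α, k, hT, ha⟩
    exact ⟨n, α, k, hT, Subfield.inv_mem _ ha⟩

lemma aux_conicSet_conic : IsConicClosed conicSet := by
  refine ⟨?_, ?_, ?_, ?_⟩
  · -- I ∈ conicSet
    refine ⟨1, fun _ => Complex.I, fun _ => 2, ⟨fun _ => Or.inl rfl, fun i => ?_⟩,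
      Subfield.subset_closure ⟨0, rfl⟩⟩
    have : Complex.I ^ 2 = -1 := Complex.I_sq
    rw [this]
    exact Subfield.neg_mem _ (Subfield.one_mem _)
  · -- conjugation
    rintro z ⟨n, α, k, hT, hz⟩
    refine ⟨n, (starRingEnd ℂ) ∘ α, k, ⟨hT.1, fun i => ?_⟩, ?_⟩
    · have h1 : ((starRingEnd ℂ) ∘ α) i ^ k i = (starRingEnd ℂ) (α i ^ k i) := by
        simp [map_pow]
      rw [h1]
      have := aux_conj_closure (hT.2 i)
      rwa [← Set.image_comp] at this
    · have := aux_conj_closure hz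
      rwa [← Set.range_comp] at this
  · -- square roots
    rintro z ⟨n, α, k, hT, hz⟩
    obtain ⟨w, hw⟩ := IsAlgClosed.exists_pow_nat_eq z (n := 2) (by norm_num)
    refine ⟨w, ⟨n + 1, Fin.snoc α w, Fin.snoc k 2,
      aux_tower_snoc hT (Or.inl rfl) (by rw [hw]; exact hz),
      Subfield.subset_closure ⟨Fin.last n, by simp⟩⟩, hw⟩
  · -- cube roots
    rintro z ⟨n, α, k, hT, hz⟩
    obtain ⟨w, hw⟩ := IsAlgClosed.exists_pow_nat_eq z (n := 3) (by norm_num)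
    refine ⟨w, ⟨n + 1, Fin.snoc α w, Fin.snoc k 3,
      aux_tower_snoc hT (Or.inr rfl) (by rw [hw]; exact hz),
      Subfield.subset_closure ⟨Fin.last n, by simp⟩⟩, hw⟩

/-- Every tower lies inside every conic-closed subfield. -/
lemma aux_tower_le {G : Subfield ℂ} (hG : IsConicClosed G)
    {n : ℕ} {α : Fin n → ℂ} {k : Fin n → ℕ} (hT : IsCTower α k) :
    ∀ i, α i ∈ G := by
  have key : ∀ m : ℕ, ∀ i : Fin n, (i : ℕ) < m → α i ∈ G := by
    intro m
    induction m with
    | zero => intro i h; omega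
    | succ m ih =>
      intro i h
      rcases Nat.lt_succ_iff_lt_or_eq.mp h with h | h
      · exact ih i h
      · have hsub : α '' {j | j < i} ⊆ G := by
          rintro x ⟨j, hj, rfl⟩
          refine ih j ?_
          have : (j : ℕ) < (i : ℕ) := hj
          omega
        have hmem : α i ^ k i ∈ G := (Subfield.closure_le.mpr hsub) (hT.2 i)
        rcases hT.1 i with hk' | hk'
        · exact aux_sq_mem hG hmem (by rw [hk'])
        · exact aux_cube_mem hG hmem (by rw [hk'])
  exact fun i => key n i i.2

lemma aux_conicSet_le {G : Subfield ℂ} (hG : IsConicClosed G) : conicSet ≤ G := by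
  rintro z ⟨n, α, k, hT, hz⟩
  have hsub : Set.range α ⊆ G := by
    rintro x ⟨i, rfl⟩
    exact aux_tower_le hG hT i
  exact (Subfield.closure_le.mpr hsub) hz

end Aux

theorem stmt_5 :
    ∃ F : Subfield ℂ, IsConicClosed F ∧ (∀ G : Subfield ℂ, IsConicClosed G → F ≤ G) ∧
      (F : Set ℂ) =
        { z : ℂ | ∃ (n : ℕ) (α : Fin n → ℂ) (k : Fin n → ℕ),
            (∀ i, k i = 2 ∨ k i = 3) ∧
            (∀ i : Fin n, α i ^ k i ∈ Subfield.closure (α '' { j | j < i })) ∧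
            z ∈ Subfield.closure (Set.range α) } := by
  refine ⟨conicSet, aux_conicSet_conic, fun G hG => aux_conicSet_le hG, ?_⟩
  ext z
  constructor
  · rintro ⟨n, α, k, hT, hz⟩
    exact ⟨n, α, k, hT.1, hT.2, hz⟩
  · rintro ⟨n, α, k, hk, hT, hz⟩
    exact ⟨n, α, k, ⟨hk, hT⟩, hz⟩
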